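/- Let k ≥ 1 be an integer and let T be a balanced tree on 2k or 2k+1 vertices. For every integer a with 1 ≤ a ≤ k there exists an independent set I ⊆ V(T) with |I| ≤ a such that every connected component of T − I has at most k − a + 1 vertices. -/

import Mathlib

set_option linter.unusedSectionVars false

open Finset

namespace Stmt9

variable {V : Type} [Fintype V] [DecidableEq V] (T : SimpleGraph V)

/-- Reachability of `y` from `x` by a walk staying inside the finite set `S`. -/
def RW (S : Finset V) (x y : V) : Prop :=
  Relation.ReflTransGen (fun a b => a ∈ S ∧ b ∈ S ∧ T.Adj a b) x y

/-- The connected component of `v` inside `S`. -/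
noncomputable def comp (S : Finset V) (v : V) : Finset V :=
  @Finset.filter _ (fun w => RW T S v w) (Classical.decPred _) S

/-- `I` is a valid solution inside ambient vertex set `R`:
independent, and every remaining vertex lies in a "closed" set of size `≤ m`. -/
def Good (m : ℕ) (R I : Finset V) : Prop :=
  I ⊆ R ∧ (∀ x ∈ I, ∀ y ∈ I, ¬ T.Adj x y) ∧
  ∀ v ∈ R, v ∉ I → ∃ C : Finset V, C ⊆ R ∧ v ∈ C ∧ (∀ x ∈ C, x ∉ I) ∧ C.card ≤ m ∧
    ∀ x ∈ C, ∀ y ∈ R, y ∉ I → T.Adj x y → y ∈ C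

variable {T}

lemma RW.mono {S S' : Finset V} (h : S ⊆ S') {x y : V} (hxy : RW T S x y) : RW T S' x y := by
  induction hxy with
  | refl => exact .refl
  | tail _ h2 ih => exact ih.tail ⟨h h2.1, h h2.2.1, h2.2.2⟩

lemma RW.symm {S : Finset V} {x y : V} (h : RW T S x y) : RW T S y x := by
  have hs : Symmetric (fun a b => a ∈ S ∧ b ∈ S ∧ T.Adj a b) :=
    fun a b h => ⟨h.2.1, h.1, h.2.2.symm⟩
  haveI : Std.Symm (fun a b => a ∈ S ∧ b ∈ S ∧ T.Adj a b) := ⟨hs⟩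
  exact (Relation.ReflTransGen.stdSymm (r := fun a b => a ∈ S ∧ b ∈ S ∧ T.Adj a b)).symm _ _ h

lemma mem_comp {S : Finset V} {v x : V} : x ∈ comp T S v ↔ x ∈ S ∧ RW T S v x := by
  simp [comp, Finset.mem_filter]

lemma comp_subset {S : Finset V} {v : V} : comp T S v ⊆ S := fun x hx => (mem_comp.1 hx).1

lemma mem_comp_self {S : Finset V} {v : V} (hv : v ∈ S) : v ∈ comp T S v :=
  mem_comp.2 ⟨hv, .refl⟩

lemma comp_closed {S : Finset V} {v x y : V} (hx : x ∈ comp T S v) (hy : y ∈ S)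
    (hadj : T.Adj x y) : y ∈ comp T S v := by
  rcases mem_comp.1 hx with ⟨hxS, hrw⟩
  exact mem_comp.2 ⟨hy, hrw.tail ⟨hxS, hy, hadj⟩⟩

lemma rw_comp_of_mem {S : Finset V} {v x : V} (hx : x ∈ comp T S v) :
    RW T (comp T S v) v x := by
  rcases mem_comp.1 hx with ⟨hxS, hrw⟩
  clear hx
  induction hrw with
  | refl => exact .refl
  | @tail b c hvb hbc ih =>
      have hb : b ∈ comp T S v := mem_comp.2 ⟨hbc.1, hvb⟩
      have hc : c ∈ comp T S v := mem_comp.2 ⟨hbc.2.1, hvb.tail hbc⟩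
      exact (ih hbc.1).tail ⟨hb, hc, hbc.2.2⟩

lemma comp_conn {S : Finset V} {v x y : V} (hx : x ∈ comp T S v) (hy : y ∈ comp T S v) :
    RW T (comp T S v) x y :=
  (rw_comp_of_mem hx).symm.trans (rw_comp_of_mem hy)

lemma comp_eq_of_mem {S : Finset V} {v x : V} (hx : x ∈ comp T S v) :
    comp T S x = comp T S v := by
  rcases mem_comp.1 hx with ⟨hxS, hrw⟩
  ext w
  simp only [mem_comp]
  exact ⟨fun ⟨h1, h2⟩ => ⟨h1, hrw.trans h2⟩, fun ⟨h1, h2⟩ => ⟨h1, hrw.symm.trans h2⟩⟩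

lemma rw_to_walk {S : Finset V} {x y : V} (hx : x ∈ S) (h : RW T S x y) :
    ∃ w : T.Walk x y, ∀ z ∈ w.support, z ∈ S := by
  induction h with
  | refl => exact ⟨.nil, by simpa using hx⟩
  | tail _ h2 ih =>
      obtain ⟨w, hw⟩ := ih
      refine ⟨w.concat h2.2.2, ?_⟩
      intro z hz
      rw [SimpleGraph.Walk.support_concat, List.mem_append] at hz
      rcases hz with h' | h'
      · exact hw z h'
      · simp only [List.mem_singleton] at h'
        exact h' ▸ h2.2.1

lemma walk_to_rw {S : Finset V} {x y : V} (w : T.Walk x y)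
    (hw : ∀ z ∈ w.support, z ∈ S) : RW T S x y := by
  induction w with
  | nil => exact .refl
  | @cons a b c h p ih =>
      refine Relation.ReflTransGen.head ⟨hw a (by simp), hw b (by simp), h⟩ ?_
      exact ih (fun z hz => hw z (by simp [hz]))

lemma first_hit {S : Finset V} {w p : V} (h : RW T S w p) (hwp : w ≠ p) :
    ∃ q, q ∈ S ∧ T.Adj q p ∧ RW T (S.erase p) w q := by
  induction h using Relation.ReflTransGen.head_induction_on with
  | refl => exact absurd rfl hwp
  | @head a b hab hbp ih =>
      by_cases hb : b = p
      · subst hb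
        exact ⟨a, hab.1, hab.2.2, .refl⟩
      · obtain ⟨q, hq1, hq2, hq3⟩ := ih hb
        have ha : a ≠ p := hwp
        exact ⟨q, hq1, hq2,
          Relation.ReflTransGen.head
            ⟨Finset.mem_erase.2 ⟨ha, hab.1⟩, Finset.mem_erase.2 ⟨hb, hab.2.1⟩, hab.2.2⟩ hq3⟩

section Tree

variable (htree : T.IsTree)

include htree

/-- In a tree, a vertex `p` has at most one neighbour in any connected set avoiding `p`. -/
lemma unique_nbr {S : Finset V} {p x y : V} (hp : p ∉ S)
    (hpx : T.Adj p x) (hpy : T.Adj p y) (hx : x ∈ S) (h : RW T S x y) : x = y := by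
  by_contra hxy
  obtain ⟨w, hw⟩ := rw_to_walk hx h
  have hyp : y ≠ p := fun hh => hp (hh ▸ hw y (SimpleGraph.Walk.end_mem_support w))
  have hxp : x ≠ p := fun hh => hp (hh ▸ hx)
  let w2 : T.Walk x y := .cons hpx.symm (.cons hpy .nil)
  have hw2 : w2.IsPath := by
    rw [SimpleGraph.Walk.isPath_def]
    simp only [w2, SimpleGraph.Walk.support_cons, SimpleGraph.Walk.support_nil]
    refine List.nodup_cons.2 ⟨?_, List.nodup_cons.2 ⟨?_, List.nodup_singleton _⟩⟩
    · simp only [List.mem_cons, List.mem_singleton, List.not_mem_nil, or_false]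
      push_neg
      exact ⟨hxp, hxy⟩
    · simpa using fun h => hyp h.symm
  have := htree.IsAcyclic.path_unique ⟨w2, hw2⟩ w.toPath
  have hpmem : p ∈ w2.support := by simp [w2]
  rw [show w2 = (w.toPath : T.Walk x y) from congrArg Subtype.val this] at hpmem
  exact hp (hw p (SimpleGraph.Walk.support_toPath_subset w hpmem))

lemma sibling_not_adj {u c c' : V} (h1 : T.Adj u c) (h2 : T.Adj u c') (h3 : c ≠ c') :
    ¬ T.Adj c c' := by
  intro hadj
  have hu1 : u ∉ ({c, c'} : Finset V) := by
    simp only [Finset.mem_insert, Finset.mem_singleton]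
    push_neg
    exact ⟨h1.ne, h2.ne⟩
  have : RW T {c, c'} c c' :=
    Relation.ReflTransGen.single ⟨by simp, by simp, hadj⟩
  exact h3 (unique_nbr htree hu1 h1 h2 (by simp) this)

lemma br_nbr_unique {S : Finset V} {p q x : V} (hp : p ∉ S)
    (hx : x ∈ comp T S q) (hq : T.Adj p q) (hqS : q ∈ S) (hpx : T.Adj p x) : x = q :=
  unique_nbr htree hp hpx hq (comp_subset hx)
    ((comp_conn hx (mem_comp_self hqS)).mono comp_subset)

lemma br_roots_inj {S : Finset V} {p q q' x : V} (hp : p ∉ S)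
    (hq : T.Adj p q) (hq' : T.Adj p q') (hqS : q ∈ S) (hq'S : q' ∈ S)
    (hx : x ∈ comp T S q) (hx' : x ∈ comp T S q') : q = q' := by
  have h1 : q' ∈ comp T S q := by
    have e := comp_eq_of_mem hx
    have e' := comp_eq_of_mem hx'
    have heq : comp T S q' = comp T S q := e'.symm.trans e
    exact heq ▸ mem_comp_self hq'S
  exact (br_nbr_unique htree hp h1 hq hqS hq').symm

end Tree

variable (T) in
/-- The side of the edge `up` containing `u`. -/
@[reducible] noncomputable def side (u p : V) : Finset V := comp T (univ.erase p) u

section Side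

variable (htree : T.IsTree)
include htree

lemma side_cover {u p : V} (hup : T.Adj u p) (w : V) :
    w ∈ side T u p ∨ w ∈ side T p u := by
  have hune : u ≠ p := hup.ne
  by_cases hwu : w = u
  · rw [hwu]
    exact Or.inl (mem_comp_self (Finset.mem_erase.2 ⟨hune, Finset.mem_univ u⟩))
  by_cases hwp : w = p
  · rw [hwp]
    exact Or.inr (mem_comp_self (Finset.mem_erase.2 ⟨hune.symm, Finset.mem_univ p⟩))
  obtain ⟨W⟩ := htree.isConnected w u
  set P : T.Walk w u := (W.toPath : T.Walk w u) with hPdef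
  have hPpath : P.IsPath := W.toPath.2
  by_cases hp : p ∈ P.support
  · right
    set pre := P.takeUntil p hp with hpre
    have hu_not : u ∉ pre.support := by
      intro hu
      have hspec := P.take_spec hp
      have hnodup := hPpath.support_nodup
      rw [← hspec, SimpleGraph.Walk.support_append] at hnodup
      have hdisj := List.disjoint_of_nodup_append hnodup
      have hu2 : u ∈ (P.dropUntil p hp).support.tail := by
        have h1 : u ∈ (P.dropUntil p hp).support :=
          SimpleGraph.Walk.end_mem_support _
        rw [SimpleGraph.Walk.support_eq_cons] at h1
        rcases List.mem_cons.1 h1 with h2 | h2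
        · exact absurd h2 hune
        · exact h2
      exact hdisj hu hu2
    have hrw : RW T (univ.erase u) w p := by
      apply walk_to_rw pre
      intro z hz
      refine Finset.mem_erase.2 ⟨?_, Finset.mem_univ z⟩
      intro hzu; exact hu_not (hzu ▸ hz)
    exact mem_comp.2 ⟨Finset.mem_erase.2 ⟨hwu, Finset.mem_univ w⟩, hrw.symm⟩
  · left
    have hrw : RW T (univ.erase p) w u := by
      apply walk_to_rw P
      intro z hz
      refine Finset.mem_erase.2 ⟨?_, Finset.mem_univ z⟩
      intro hzp; exact hp (hzp ▸ hz)
    exact mem_comp.2 ⟨Finset.mem_erase.2 ⟨hwp, Finset.mem_univ w⟩, hrw.symm⟩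

lemma side_disjoint {u p : V} (hup : T.Adj u p) :
    Disjoint (side T u p) (side T p u) := by
  rw [Finset.disjoint_left]
  intro x hx1 hx2
  have hxu : x ≠ u := by
    intro h; subst h
    exact (Finset.mem_erase.1 (comp_subset hx2)).1 rfl
  have hxp : x ≠ p := (Finset.mem_erase.1 (comp_subset hx1)).1
  have hup' : u ∈ (univ.erase p : Finset V) := Finset.mem_erase.2 ⟨hup.ne, Finset.mem_univ u⟩
  have hpu' : p ∈ (univ.erase u : Finset V) := Finset.mem_erase.2 ⟨hup.ne.symm, Finset.mem_univ p⟩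
  obtain ⟨w1, hw1⟩ := rw_to_walk hup' (mem_comp.1 hx1).2
  obtain ⟨w2, hw2⟩ := rw_to_walk hpu' (mem_comp.1 hx2).2
  set P1 := w1.toPath with hP1
  set P2 := w2.toPath with hP2
  have hu_not : u ∉ (P2 : T.Walk p x).support := by
    intro h
    have := hw2 u (SimpleGraph.Walk.support_toPath_subset w2 h)
    exact (Finset.mem_erase.1 this).1 rfl
  set w3 : T.Walk u x := .cons hup (P2 : T.Walk p x) with hw3
  have hw3path : w3.IsPath := SimpleGraph.Walk.IsPath.cons P2.2 hu_not
  have heq := htree.IsAcyclic.path_unique ⟨w3, hw3path⟩ P1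
  have hpmem : p ∈ w3.support := by simp [hw3]
  rw [show w3 = (P1 : T.Walk u x) from congrArg Subtype.val heq] at hpmem
  have := hw1 p (SimpleGraph.Walk.support_toPath_subset w1 hpmem)
  exact (Finset.mem_erase.1 this).1 rfl

lemma side_cross {u p x y : V} (hup : T.Adj u p)
    (hx : x ∈ side T u p) (hy : y ∈ side T p u) (hadj : T.Adj x y) :
    x = u ∧ y = p := by
  have hyp : y = p := by
    by_contra hyp
    have hyS : y ∈ (univ.erase p : Finset V) := Finset.mem_erase.2 ⟨hyp, Finset.mem_univ y⟩
    have : y ∈ side T u p := comp_closed hx hyS hadj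
    exact (Finset.disjoint_left.1 (side_disjoint htree hup)) this hy
  have hxu : x = u := by
    have hpnot : p ∉ side T u p := fun h => (Finset.mem_erase.1 (comp_subset h)).1 rfl
    have huin : u ∈ side T u p := mem_comp_self (Finset.mem_erase.2 ⟨hup.ne, Finset.mem_univ u⟩)
    have hadj' : T.Adj p x := by rw [← hyp]; exact hadj.symm
    exact unique_nbr htree hpnot hadj' hup.symm hx (comp_conn hx huin)
  exact ⟨hxu, hyp⟩

lemma side_card_sum {u p : V} (hup : T.Adj u p) :
    (side T u p).card + (side T p u).card = Fintype.card V := by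
  rw [← Finset.card_union_of_disjoint (side_disjoint htree hup)]
  have : side T u p ∪ side T p u = univ :=
    Finset.eq_univ_iff_forall.2 fun w => Finset.mem_union.2 (side_cover htree hup w)
  rw [this, Finset.card_univ]

lemma side_subset_side {q z w : V} (hqz : T.Adj q z) (hqw : T.Adj q w) (hwz : w ≠ z) :
    side T w q ⊆ (side T q z).erase q := by
  have hznot : z ∉ side T w q := by
    intro hz
    have hwS : w ∈ (univ.erase q : Finset V) := Finset.mem_erase.2 ⟨hqw.ne.symm, Finset.mem_univ w⟩
    obtain ⟨w1, hw1⟩ := rw_to_walk hwS (mem_comp.1 hz).2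
    set P' := w1.toPath with hP'
    have hq_not : q ∉ (P' : T.Walk w z).support := by
      intro h
      have := hw1 q (SimpleGraph.Walk.support_toPath_subset w1 h)
      exact (Finset.mem_erase.1 this).1 rfl
    set pA : T.Walk q z := .cons hqz .nil with hpA
    have hpApath : pA.IsPath := by
      rw [SimpleGraph.Walk.isPath_def]
      simp [hpA, hqz.ne]
    set pB : T.Walk q z := .cons hqw (P' : T.Walk w z) with hpB
    have hpBpath : pB.IsPath := SimpleGraph.Walk.IsPath.cons P'.2 hq_not
    have heq := htree.IsAcyclic.path_unique ⟨pA, hpApath⟩ ⟨pB, hpBpath⟩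
    have hwmem : w ∈ pB.support := by simp [hpB]
    rw [show pB = pA from (congrArg Subtype.val heq).symm] at hwmem
    simp [hpA] at hwmem
    rcases hwmem with h | h
    · exact hqw.ne h.symm
    · exact hwz h
  intro x hx
  have hxq : x ≠ q := (Finset.mem_erase.1 (comp_subset hx)).1
  have hssub : side T w q ⊆ univ.erase z := by
    intro t ht
    refine Finset.mem_erase.2 ⟨?_, Finset.mem_univ t⟩
    intro h; exact hznot (h ▸ ht)
  have hrw1 : RW T (univ.erase z) w x := (rw_comp_of_mem hx).mono hssub
  have hrw : RW T (univ.erase z) q x := by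
    refine Relation.ReflTransGen.head ⟨?_, ?_, hqw⟩ hrw1
    · exact Finset.mem_erase.2 ⟨hqz.ne, Finset.mem_univ q⟩
    · exact Finset.mem_erase.2 ⟨hwz, Finset.mem_univ w⟩
  exact Finset.mem_erase.2 ⟨hxq, mem_comp.2 ⟨Finset.mem_erase.2 ⟨fun h => hznot (h ▸ hx), Finset.mem_univ x⟩, hrw⟩⟩

end Side

/- Good for trivial solutions -/

lemma good_empty (m : ℕ) (R : Finset V) (hcard : R.card ≤ m) : Good T m R ∅ := by
  refine ⟨Finset.empty_subset _, by simp, ?_⟩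
  intro v hv _
  exact ⟨R, Finset.Subset.refl _, hv, by simp, hcard, fun x _ y hy _ _ => hy⟩

lemma good_center (m : ℕ) (R : Finset V) (p : V) (hp : p ∈ R)
    (hbr : ∀ v ∈ R.erase p, (comp T (R.erase p) v).card ≤ m) : Good T m R {p} := by
  refine ⟨by simpa using hp, ?_, ?_⟩
  · intro x hx y hy
    simp only [Finset.mem_singleton] at hx hy
    subst hx; subst hy
    exact T.irrefl
  · intro v hv hvp
    have hv' : v ∈ R.erase p := Finset.mem_erase.2 ⟨by simpa using hvp, hv⟩
    refine ⟨comp T (R.erase p) v, comp_subset.trans (Finset.erase_subset _ _),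
      mem_comp_self hv', ?_, hbr v hv', ?_⟩
    · intro x hx
      have := (Finset.mem_erase.1 (comp_subset hx)).1
      simpa using this
    · intro x hx y hy hyI hadj
      exact comp_closed hx (Finset.mem_erase.2 ⟨by simpa using hyI, hy⟩) hadj

/- arithmetic helpers -/

lemma select_subset {α : Type} [DecidableEq α] (F : Finset α) (wt : α → ℕ)
    (hpos : ∀ x ∈ F, 1 ≤ wt x) :
    ∀ K : ℕ, 1 ≤ K → K ≤ ∑ x ∈ F, wt x → ∃ D, D ⊆ F ∧ K ≤ ∑ x ∈ D, wt x ∧ D.card ≤ K := by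
  induction F using Finset.induction_on with
  | empty =>
      intro K hK1 hK2
      simp only [Finset.sum_empty] at hK2
      omega
  | @insert a F' ha ih =>
      intro K hK1 hK2
      by_cases hcase : K ≤ wt a
      · refine ⟨{a}, by simp, by simpa using hcase, by simpa using hK1⟩
      · push_neg at hcase
        have hA : 1 ≤ wt a := hpos a (Finset.mem_insert_self _ _)
        rw [Finset.sum_insert ha] at hK2
        obtain ⟨D, hD1, hD2, hD3⟩ :=
          ih (fun x hx => hpos x (Finset.mem_insert_of_mem hx)) (K - wt a) (by omega) (by omega)
        have haD : a ∉ D := fun h => ha (hD1 h)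
        refine ⟨insert a D, Finset.insert_subset_insert _ hD1, ?_, ?_⟩
        · rw [Finset.sum_insert haD]; omega
        · rw [Finset.card_insert_of_notMem haD]; omega

lemma pp_arith {α : Type} [DecidableEq α] (F : Finset α) (n : α → ℕ) (m SK cardR : ℕ)
    (hne : F.Nonempty) (hn1 : ∀ q ∈ F, 1 ≤ n q) (hm : 1 ≤ m)
    (hlow : ∀ q ∈ F, m ≤ SK + n q)
    (htot : SK + (∑ q ∈ F, n q) + 1 = cardR) :
    (∑ q ∈ F, ((n q - m) + 1)) + m ≤ cardR := by
  obtain ⟨q0, hq0⟩ := hne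
  have e1 : (∑ q ∈ F, ((n q - m) + 1)) + (∑ q ∈ F, min (n q) m)
      = (∑ q ∈ F, n q) + F.card := by
    rw [← Finset.sum_add_distrib]
    have h : ∀ q ∈ F, ((n q - m) + 1) + min (n q) m = n q + 1 := fun q _ => by omega
    rw [Finset.sum_congr rfl h, Finset.sum_add_distrib]
    simp
  have e2 : m ≤ SK + min (n q0) m := by have := hlow q0 hq0; omega
  have e3 : min (n q0) m + (F.card - 1) ≤ ∑ q ∈ F, min (n q) m := by
    have h1 : (F.erase q0).card ≤ ∑ q ∈ F.erase q0, min (n q) m := by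
      calc (F.erase q0).card = ∑ _q ∈ F.erase q0, 1 := by simp
      _ ≤ _ := Finset.sum_le_sum (fun q hq => by
          have := hn1 q (Finset.mem_of_mem_erase hq); omega)
    have h2 : ∑ q ∈ F, min (n q) m = min (n q0) m + ∑ q ∈ F.erase q0, min (n q) m :=
      (Finset.add_sum_erase F _ hq0).symm
    have h3 : (F.erase q0).card = F.card - 1 := Finset.card_erase_of_mem hq0
    omega
  have hc1 : 1 ≤ F.card := Finset.card_pos.2 ⟨q0, hq0⟩
  omega

theorem PP (htree : T.IsTree) (m : ℕ) (hm : 1 ≤ m) :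
    ∀ (fuel : ℕ) (R : Finset V), R.card ≤ fuel →
    (∀ x ∈ R, ∀ y ∈ R, RW T R x y) → ∀ p, p ∈ R →
    ∃ IU IW : Finset V, Good T m R IU ∧ Good T m R IW ∧ p ∈ IU ∧ p ∉ IW ∧
      IU.card + IW.card ≤ (R.card - m) + 1 := by
  classical
  intro fuel
  induction fuel with
  | zero =>
      intro R hR _ p hp
      have := Finset.card_pos.2 ⟨p, hp⟩
      omega
  | succ fuel ih =>
    intro R hRcard hconn p hp
    by_cases hsmall : R.card ≤ m
    · refine ⟨{p}, ∅, ?_, good_empty m R hsmall, Finset.mem_singleton_self p,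
        Finset.notMem_empty p, ?_⟩
      · apply good_center m R p hp
        intro v hv
        calc (comp T (R.erase p) v).card ≤ (R.erase p).card := Finset.card_le_card comp_subset
          _ ≤ m := by rw [Finset.card_erase_of_mem hp]; omega
      · simp only [Finset.card_singleton, Finset.card_empty]
        omega
    · push_neg at hsmall
      have hpS : p ∉ R.erase p := fun h => (Finset.mem_erase.1 h).1 rfl
      have hSsub : R.erase p ⊆ R := Finset.erase_subset _ _
      have hScard : (R.erase p).card = R.card - 1 := Finset.card_erase_of_mem hp
      set N := R.filter (fun q => T.Adj p q) with hN
      set B : V → Finset V := fun q => comp T (R.erase p) q with hB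
      have hBsub : ∀ q, B q ⊆ R.erase p := fun q => comp_subset
      have hNadj : ∀ q ∈ N, T.Adj p q := fun q hq => (Finset.mem_filter.1 hq).2
      have hNS : ∀ q ∈ N, q ∈ R.erase p := fun q hq =>
        Finset.mem_erase.2 ⟨(hNadj q hq).ne', (Finset.mem_filter.1 hq).1⟩
      have hqB : ∀ q ∈ N, q ∈ B q := fun q hq => mem_comp_self (hNS q hq)
      have hcover : ∀ w ∈ R.erase p, ∃ q ∈ N, w ∈ B q := by
        intro w hw
        have hwR : w ∈ R := hSsub hw
        have hwp : w ≠ p := (Finset.mem_erase.1 hw).1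
        obtain ⟨q, hqR, hqadj, hrw⟩ := first_hit (hconn w hwR p hp) hwp
        exact ⟨q, Finset.mem_filter.2 ⟨hqR, hqadj.symm⟩, mem_comp.2 ⟨hw, hrw.symm⟩⟩
      have hnbru : ∀ q ∈ N, ∀ x, x ∈ B q → T.Adj p x → x = q := fun q hq x hx hpx =>
        br_nbr_unique htree hpS hx (hNadj q hq) (hNS q hq) hpx
      have hdisjB : ∀ q ∈ N, ∀ q' ∈ N, q ≠ q' → Disjoint (B q) (B q') := by
        intro q hq q' hq' hne
        rw [Finset.disjoint_left]
        intro x hx hx'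
        exact hne (br_roots_inj htree hpS (hNadj q hq) (hNadj q' hq')
          (hNS q hq) (hNS q' hq') hx hx')
      have hnoX : ∀ q ∈ N, ∀ q' ∈ N, q ≠ q' → ∀ x ∈ B q, ∀ y ∈ B q', ¬ T.Adj x y := by
        intro q hq q' hq' hne x hx y hy hadj
        have : y ∈ B q := comp_closed hx (hBsub q' hy) hadj
        exact (Finset.disjoint_left.1 (hdisjB q hq q' hq' hne)) this hy
      have hUnion : N.biUnion B = R.erase p := by
        apply Finset.Subset.antisymm
        · intro w hw
          obtain ⟨q, _, hwq⟩ := Finset.mem_biUnion.1 hw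
          exact hBsub q hwq
        · intro w hw
          obtain ⟨q, hq, hwq⟩ := hcover w hw
          exact Finset.mem_biUnion.2 ⟨q, hq, hwq⟩
      have hsumN : ∑ q ∈ N, (B q).card = R.card - 1 := by
        rw [← Finset.card_biUnion hdisjB, hUnion, hScard]
      set Pfam := N.powerset.filter (fun K => ∑ q ∈ K, (B q).card ≤ m - 1) with hPfam
      have hPne : Pfam.Nonempty := ⟨∅, by simp [hPfam]⟩
      obtain ⟨K, hKP, hKmax⟩ := Finset.exists_max_image Pfam (fun K => ∑ q ∈ K, (B q).card) hPne
      have hKN : K ⊆ N := Finset.mem_powerset.1 (Finset.mem_filter.1 hKP).1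
      have hSK : ∑ q ∈ K, (B q).card ≤ m - 1 := (Finset.mem_filter.1 hKP).2
      set F := N \ K with hF
      have hFsub : F ⊆ N := Finset.sdiff_subset
      have hFK : ∀ q ∈ F, q ∉ K := fun q hq => (Finset.mem_sdiff.1 hq).2
      have hKF : ∀ q ∈ K, q ∉ F := fun q hq hq' => (Finset.mem_sdiff.1 hq').2 hq
      have hsplit : ∑ q ∈ K, (B q).card + ∑ q ∈ F, (B q).card = R.card - 1 := by
        rw [← hsumN, ← Finset.sum_union Finset.disjoint_sdiff]
        congr 1
        exact Finset.union_sdiff_of_subset hKN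
      have hBpos : ∀ q ∈ N, 1 ≤ (B q).card := fun q hq => Finset.card_pos.2 ⟨q, hqB q hq⟩
      have hFne : F.Nonempty := by
        rw [Finset.nonempty_iff_ne_empty]
        intro hFe
        rw [hFe, Finset.sum_empty] at hsplit
        omega
      have hlow : ∀ q ∈ F, m ≤ (∑ x ∈ K, (B x).card) + (B q).card := by
        intro q hq
        by_contra hcon
        push_neg at hcon
        have hqK : q ∉ K := hFK q hq
        have hins : insert q K ∈ Pfam := by
          rw [hPfam, Finset.mem_filter, Finset.mem_powerset]
          refine ⟨Finset.insert_subset (hFsub hq) hKN, ?_⟩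
          rw [Finset.sum_insert hqK]
          omega
        have h2 := hKmax _ hins
        rw [Finset.sum_insert hqK] at h2
        have h3 := hBpos q (hFsub hq)
        omega
      have hrec : ∀ q, ∃ IUq IWq : Finset V, q ∈ F →
          Good T m (B q) IUq ∧ Good T m (B q) IWq ∧ q ∈ IUq ∧ q ∉ IWq ∧
           IUq.card + IWq.card ≤ ((B q).card - m) + 1 := by
        intro q
        by_cases hq : q ∈ F
        · have hqN := hFsub hq
          have hcard : (B q).card ≤ fuel := by
            have h1 : (B q).card ≤ (R.erase p).card := Finset.card_le_card (hBsub q)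
            omega
          obtain ⟨IUq, IWq, h1, h2, h3, h4, h5⟩ :=
            ih (B q) hcard (fun x hx y hy => comp_conn hx hy) q (hqB q hqN)
          exact ⟨IUq, IWq, fun _ => ⟨h1, h2, h3, h4, h5⟩⟩
        · exact ⟨∅, ∅, fun h => absurd h hq⟩
      choose IUf IWf hIf using hrec
      have hIUf_sub : ∀ q ∈ F, IUf q ⊆ B q := fun q hq => ((hIf q hq).1).1
      have hIWf_sub : ∀ q ∈ F, IWf q ⊆ B q := fun q hq => ((hIf q hq).2.1).1
      set IW := F.biUnion IUf with hIWdef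
      set IU := insert p (F.biUnion IWf) with hIUdef
      have hpB : ∀ q, p ∉ B q := fun q h => hpS (hBsub q h)
      have hpIW : p ∉ IW := by
        intro h
        obtain ⟨q, hq, h2⟩ := Finset.mem_biUnion.1 h
        exact hpB q (hIUf_sub q hq h2)
      have hGoodIU : Good T m R IU := by
        refine ⟨?_, ?_, ?_⟩
        · intro x hx
          rcases Finset.mem_insert.1 hx with h | h
          · exact h ▸ hp
          · obtain ⟨q, hq, h2⟩ := Finset.mem_biUnion.1 h
            exact hSsub (hBsub q (hIWf_sub q hq h2))
        · intro x hx y hy hadj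
          rcases Finset.mem_insert.1 hx with hxp | hxB
          · subst hxp
            rcases Finset.mem_insert.1 hy with hyp | hyB
            · exact T.irrefl (hyp ▸ hadj)
            · obtain ⟨q, hq, h2⟩ := Finset.mem_biUnion.1 hyB
              have hyq : y = q := hnbru q (hFsub hq) y (hIWf_sub q hq h2) hadj
              exact ((hIf q hq).2.2.2.1) (hyq ▸ h2)
          · obtain ⟨q, hq, hx2⟩ := Finset.mem_biUnion.1 hxB
            rcases Finset.mem_insert.1 hy with hyp | hyB
            · subst hyp
              have hxq : x = q := hnbru q (hFsub hq) x (hIWf_sub q hq hx2) hadj.symm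
              exact ((hIf q hq).2.2.2.1) (hxq ▸ hx2)
            · obtain ⟨q', hq', hy2⟩ := Finset.mem_biUnion.1 hyB
              by_cases he : q = q'
              · subst he
                exact ((hIf q hq).2.1).2.1 x hx2 y hy2 hadj
              · exact hnoX q (hFsub hq) q' (hFsub hq') he x (hIWf_sub q hq hx2) y
                  (hIWf_sub q' hq' hy2) hadj
        · intro v hv hvIU
          have hvp : v ≠ p := fun h => hvIU (h ▸ Finset.mem_insert_self _ _)
          have hvS : v ∈ R.erase p := Finset.mem_erase.2 ⟨hvp, hv⟩
          obtain ⟨q0, hq0N, hvq0⟩ := hcover v hvS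
          by_cases hq0F : q0 ∈ F
          · have hvnot : v ∉ IWf q0 := fun h =>
              hvIU (Finset.mem_insert_of_mem (Finset.mem_biUnion.2 ⟨q0, hq0F, h⟩))
            obtain ⟨C, hC1, hC2, hC3, hC4, hC5⟩ := ((hIf q0 hq0F).2.1).2.2 v hvq0 hvnot
            refine ⟨C, hC1.trans ((hBsub q0).trans hSsub), hC2, ?_, hC4, ?_⟩
            · intro x hx hxIU
              have hxB : x ∈ B q0 := hC1 hx
              rcases Finset.mem_insert.1 hxIU with h | h
              · exact hpB q0 (h ▸ hxB)
              · obtain ⟨q', hq', hx'⟩ := Finset.mem_biUnion.1 h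
                by_cases he : q' = q0
                · exact (hC3 x hx) (he ▸ hx')
                · exact (Finset.disjoint_left.1
                    (hdisjB q' (hFsub hq') q0 hq0N he)) (hIWf_sub q' hq' hx') hxB
            · intro x hx y hyR hyIU hadj
              have hxB : x ∈ B q0 := hC1 hx
              have hyp2 : y ≠ p := fun h => hyIU (h ▸ Finset.mem_insert_self _ _)
              have hyS : y ∈ R.erase p := Finset.mem_erase.2 ⟨hyp2, hyR⟩
              have hyB : y ∈ B q0 := comp_closed hxB hyS hadj
              have hynot : y ∉ IWf q0 := fun h =>
                hyIU (Finset.mem_insert_of_mem (Finset.mem_biUnion.2 ⟨q0, hq0F, h⟩))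
              exact hC5 x hx y hyB hynot hadj
          · have hq0K : q0 ∈ K := by
              by_contra h
              exact hq0F (Finset.mem_sdiff.2 ⟨hq0N, h⟩)
            refine ⟨B q0, (hBsub q0).trans hSsub, hvq0, ?_, ?_, ?_⟩
            · intro x hx hxIU
              rcases Finset.mem_insert.1 hxIU with h | h
              · exact hpB q0 (h ▸ hx)
              · obtain ⟨q', hq', hx'⟩ := Finset.mem_biUnion.1 h
                have hne : q' ≠ q0 := fun he => (hFK q' hq') (he ▸ hq0K)
                exact (Finset.disjoint_left.1
                  (hdisjB q' (hFsub hq') q0 hq0N hne)) (hIWf_sub q' hq' hx') hx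
            · have h1 : (B q0).card ≤ ∑ q ∈ K, (B q).card :=
                Finset.single_le_sum (f := fun q => (B q).card) (fun _ _ => Nat.zero_le _) hq0K
              omega
            · intro x hx y hyR hyIU hadj
              have hyp2 : y ≠ p := fun h => hyIU (h ▸ Finset.mem_insert_self _ _)
              exact comp_closed hx (Finset.mem_erase.2 ⟨hyp2, hyR⟩) hadj
      have hGoodIW : Good T m R IW := by
        refine ⟨?_, ?_, ?_⟩
        · intro x hx
          obtain ⟨q, hq, h2⟩ := Finset.mem_biUnion.1 hx
          exact hSsub (hBsub q (hIUf_sub q hq h2))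
        · intro x hx y hy hadj
          obtain ⟨q, hq, hx2⟩ := Finset.mem_biUnion.1 hx
          obtain ⟨q', hq', hy2⟩ := Finset.mem_biUnion.1 hy
          by_cases he : q = q'
          · subst he
            exact ((hIf q hq).1).2.1 x hx2 y hy2 hadj
          · exact hnoX q (hFsub hq) q' (hFsub hq') he x (hIUf_sub q hq hx2) y
              (hIUf_sub q' hq' hy2) hadj
        · intro v hv hvIW
          by_cases hkept : v = p ∨ ∃ q ∈ K, v ∈ B q
          · refine ⟨insert p (K.biUnion B), ?_, ?_, ?_, ?_, ?_⟩
            · intro x hx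
              rcases Finset.mem_insert.1 hx with h | h
              · exact h ▸ hp
              · obtain ⟨q, hq, h2⟩ := Finset.mem_biUnion.1 h
                exact hSsub (hBsub q h2)
            · rcases hkept with h | ⟨q, hq, h2⟩
              · exact h ▸ Finset.mem_insert_self _ _
              · exact Finset.mem_insert_of_mem (Finset.mem_biUnion.2 ⟨q, hq, h2⟩)
            · intro x hx hxIW
              obtain ⟨q', hq', hx'⟩ := Finset.mem_biUnion.1 hxIW
              have hxB' : x ∈ B q' := hIUf_sub q' hq' hx'
              rcases Finset.mem_insert.1 hx with h | h
              · exact hpB q' (h ▸ hxB')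
              · obtain ⟨q, hq, h2⟩ := Finset.mem_biUnion.1 h
                have hne : q ≠ q' := fun he => (hFK q' hq') (he ▸ hq)
                exact (Finset.disjoint_left.1
                  (hdisjB q (hKN hq) q' (hFsub hq') hne)) h2 hxB'
            · have h1 : (K.biUnion B).card ≤ ∑ q ∈ K, (B q).card := Finset.card_biUnion_le
              have h2 : (insert p (K.biUnion B)).card ≤ (K.biUnion B).card + 1 :=
                Finset.card_insert_le _ _
              omega
            · intro x hx y hyR hyIW hadj
              rcases Finset.mem_insert.1 hx with hxp | hxB
              · have hadj' : T.Adj p y := by rw [← hxp]; exact hadj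
                have hyp2 : y ≠ p := fun h => T.irrefl (h ▸ hadj')
                have hyS : y ∈ R.erase p := Finset.mem_erase.2 ⟨hyp2, hyR⟩
                obtain ⟨q1, hq1N, hyq1⟩ := hcover y hyS
                have hyq : y = q1 := hnbru q1 hq1N y hyq1 hadj'
                by_cases hq1K : q1 ∈ K
                · exact Finset.mem_insert_of_mem (Finset.mem_biUnion.2 ⟨q1, hq1K, hyq1⟩)
                · have hq1F : q1 ∈ F := Finset.mem_sdiff.2 ⟨hq1N, hq1K⟩
                  have hyIU : y ∈ IUf q1 := by rw [hyq]; exact (hIf q1 hq1F).2.2.1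
                  exact absurd (Finset.mem_biUnion.2 ⟨q1, hq1F, hyIU⟩) hyIW
              · obtain ⟨q, hqK, hxq⟩ := Finset.mem_biUnion.1 hxB
                by_cases hyp2 : y = p
                · rw [hyp2]; exact Finset.mem_insert_self _ _
                · have hyS : y ∈ R.erase p := Finset.mem_erase.2 ⟨hyp2, hyR⟩
                  have hyB : y ∈ B q := comp_closed hxq hyS hadj
                  exact Finset.mem_insert_of_mem (Finset.mem_biUnion.2 ⟨q, hqK, hyB⟩)
          · push_neg at hkept
            obtain ⟨hvp, hnK⟩ := hkept
            have hvS : v ∈ R.erase p := Finset.mem_erase.2 ⟨hvp, hv⟩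
            obtain ⟨q0, hq0N, hvq0⟩ := hcover v hvS
            have hq0F : q0 ∈ F := by
              by_contra h
              have hq0K : q0 ∈ K := by
                by_contra h2
                exact h (Finset.mem_sdiff.2 ⟨hq0N, h2⟩)
              exact hnK q0 hq0K hvq0
            have hvnot : v ∉ IUf q0 := fun h => hvIW (Finset.mem_biUnion.2 ⟨q0, hq0F, h⟩)
            obtain ⟨C, hC1, hC2, hC3, hC4, hC5⟩ := ((hIf q0 hq0F).1).2.2 v hvq0 hvnot
            refine ⟨C, hC1.trans ((hBsub q0).trans hSsub), hC2, ?_, hC4, ?_⟩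
            · intro x hx hxIW
              obtain ⟨q', hq', hx'⟩ := Finset.mem_biUnion.1 hxIW
              by_cases he : q' = q0
              · exact (hC3 x hx) (he ▸ hx')
              · exact (Finset.disjoint_left.1
                  (hdisjB q' (hFsub hq') q0 hq0N he)) (hIUf_sub q' hq' hx') (hC1 hx)
            · intro x hx y hyR hyIW hadj
              have hxB : x ∈ B q0 := hC1 hx
              have hyp2 : y ≠ p := by
                intro h
                have hxq : x = q0 := by
                  apply hnbru q0 hq0N x hxB
                  rw [← h]; exact hadj.symm
                exact (hC3 x hx) (hxq ▸ (hIf q0 hq0F).2.2.1)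
              have hyS : y ∈ R.erase p := Finset.mem_erase.2 ⟨hyp2, hyR⟩
              have hyB : y ∈ B q0 := comp_closed hxB hyS hadj
              have hynot : y ∉ IUf q0 := fun h => hyIW (Finset.mem_biUnion.2 ⟨q0, hq0F, h⟩)
              exact hC5 x hx y hyB hynot hadj
      refine ⟨IU, IW, hGoodIU, hGoodIW, Finset.mem_insert_self _ _, hpIW, ?_⟩
      have hc1 : IU.card ≤ 1 + ∑ q ∈ F, (IWf q).card := by
        have h1 : IU.card ≤ (F.biUnion IWf).card + 1 := Finset.card_insert_le _ _
        have h2 : (F.biUnion IWf).card ≤ ∑ q ∈ F, (IWf q).card := Finset.card_biUnion_le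
        omega
      have hc2 : IW.card ≤ ∑ q ∈ F, (IUf q).card := Finset.card_biUnion_le
      have hc3 : ∑ q ∈ F, ((IUf q).card + (IWf q).card) ≤ ∑ q ∈ F, (((B q).card - m) + 1) :=
        Finset.sum_le_sum (fun q hq => (hIf q hq).2.2.2.2)
      have hc4 : (∑ q ∈ F, (((B q).card - m) + 1)) + m ≤ R.card := by
        have h0 := pp_arith F (fun q => (B q).card) m (∑ q ∈ K, (B q).card) R.card hFne
          (fun q hq => hBpos q (hFsub hq)) hm hlow
          (show (∑ q ∈ K, (B q).card) + (∑ q ∈ F, (B q).card) + 1 = R.card by omega)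
        simpa using h0
      have hc5 : ∑ q ∈ F, ((IUf q).card + (IWf q).card)
          = (∑ q ∈ F, (IUf q).card) + (∑ q ∈ F, (IWf q).card) := Finset.sum_add_distrib
      omega

theorem main (htree : T.IsTree) (m a : ℕ) (hm : 1 ≤ m) (ha : 1 ≤ a)
    (hcard2 : 2 ≤ Fintype.card V) (hn : Fintype.card V + 1 ≤ 2 * a + 2 * m) :
    ∃ I : Finset V, I.card ≤ a ∧ Good T m univ I := by
  classical
  haveI hnev : Nonempty V := Fintype.card_pos_iff.1 (by omega)
  have hconnU : ∀ x ∈ (univ : Finset V), ∀ y ∈ (univ : Finset V), RW T univ x y := by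
    intro x _ y _
    obtain ⟨w⟩ := htree.isConnected x y
    exact walk_to_rw w (fun z _ => Finset.mem_univ z)
  by_cases hcase : ∃ z : V, ∀ q, T.Adj z q → (side T q z).card ≤ m
  · obtain ⟨z, hz⟩ := hcase
    refine ⟨{z}, by simpa using ha, ?_⟩
    apply good_center m univ z (Finset.mem_univ z)
    intro v hv
    have hvz : v ≠ z := (Finset.mem_erase.1 hv).1
    obtain ⟨q, _, hqadj, hrw⟩ :=
      first_hit (hconnU v (Finset.mem_univ v) z (Finset.mem_univ z)) hvz
    have hvq : v ∈ side T q z := mem_comp.2 ⟨hv, hrw.symm⟩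
    rw [show comp T (univ.erase z) v = side T q z from comp_eq_of_mem hvq]
    exact hz q hqadj.symm
  · push_neg at hcase
    set H := (Finset.univ ×ˢ Finset.univ).filter
      (fun e : V × V => T.Adj e.1 e.2 ∧ m + 1 ≤ (side T e.1 e.2).card ∧
        m + 1 ≤ (side T e.2 e.1).card) with hH
    have hHmem : ∀ x y : V, (x, y) ∈ H ↔ T.Adj x y ∧ m + 1 ≤ (side T x y).card ∧
        m + 1 ≤ (side T y x).card := by
      intro x y; rw [hH, Finset.mem_filter]
      simp [Finset.mem_product]
    have hHne : H.Nonempty := by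
      by_contra hHe
      rw [Finset.not_nonempty_iff_eq_empty] at hHe
      have hnoheavy : ∀ x y : V, T.Adj x y →
          (side T x y).card ≤ m ∨ (side T y x).card ≤ m := by
        intro x y hadj
        by_contra hcon
        push_neg at hcon
        have hmem : (x, y) ∈ H := (hHmem x y).2 ⟨hadj, by omega, by omega⟩
        rw [hHe] at hmem
        exact absurd hmem (Finset.notMem_empty _)
      obtain ⟨z, _, hzmin⟩ := Finset.exists_min_image Finset.univ
        (fun z => (Finset.univ.filter (fun q => T.Adj z q)).sup
          (fun q => (side T q z).card)) Finset.univ_nonempty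
      obtain ⟨q0, hq0a, hq0c⟩ := hcase z
      have hq0n : q0 ∈ Finset.univ.filter (fun q => T.Adj z q) := by
        simp [Finset.mem_filter, hq0a]
      have hfz : m + 1 ≤ (Finset.univ.filter (fun q => T.Adj z q)).sup
          (fun q => (side T q z).card) := by
        have h := Finset.le_sup (f := fun q => (side T q z).card) hq0n
        have h2 : (side T q0 z).card ≤ (Finset.univ.filter (fun q => T.Adj z q)).sup
          (fun q => (side T q z).card) := h
        omega
      obtain ⟨q, hqz, hfq⟩ := Finset.exists_mem_eq_sup
        (Finset.univ.filter (fun q => T.Adj z q)) ⟨q0, hq0n⟩ (fun q => (side T q z).card)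
      have hAdjzq : T.Adj z q := by
        simp only [Finset.mem_filter] at hqz
        exact hqz.2
      have h1 : (side T z q).card ≤ m := by
        rcases hnoheavy q z hAdjzq.symm with h | h
        · rw [hfq] at hfz; omega
        · exact h
      have hflt : (Finset.univ.filter (fun q' => T.Adj q q')).sup
          (fun q' => (side T q' q).card) <
          (Finset.univ.filter (fun q' => T.Adj z q')).sup (fun q' => (side T q' z).card) := by
        refine (Finset.sup_lt_iff (by rw [Nat.bot_eq_zero]; omega)).2 ?_
        intro w hw
        have hAdjqw : T.Adj q w := by
          simp only [Finset.mem_filter] at hw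
          exact hw.2
        by_cases hwz : w = z
        · rw [hwz]; omega
        · have hsub := side_subset_side htree hAdjzq.symm hAdjqw hwz
          have hle : (side T w q).card ≤ ((side T q z).erase q).card :=
            Finset.card_le_card hsub
          have hqmem : q ∈ side T q z :=
            mem_comp_self (Finset.mem_erase.2 ⟨hAdjzq.ne', Finset.mem_univ q⟩)
          have hce := Finset.card_erase_of_mem hqmem
          rw [hfq] at hfz ⊢
          omega
      exact absurd (hzmin q (Finset.mem_univ q)) (by omega)
    obtain ⟨e, heH, hemin⟩ := Finset.exists_min_image H (fun e => (side T e.1 e.2).card) hHne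
    obtain ⟨u, p⟩ := e
    obtain ⟨hup, hsig, hnp⟩ := (hHmem u p).1 heH
    set A1 := side T u p with hA1
    set A2 := side T p u with hA2
    have hdisj12 := side_disjoint htree hup
    have hcov12 := side_cover htree hup
    have hcross12 : ∀ x ∈ A1, ∀ y ∈ A2, T.Adj x y → x = u ∧ y = p :=
      fun x hx y hy hadj => side_cross htree hup hx hy hadj
    have hsum12 : A1.card + A2.card = Fintype.card V := side_card_sum htree hup
    have huA1 : u ∈ A1 := mem_comp_self (Finset.mem_erase.2 ⟨hup.ne, Finset.mem_univ u⟩)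
    have hpA2 : p ∈ A2 := mem_comp_self (Finset.mem_erase.2 ⟨hup.ne', Finset.mem_univ p⟩)
    set Nu := Finset.univ.filter (fun c => T.Adj u c ∧ c ≠ p) with hNu
    have hNumem : ∀ c, c ∈ Nu ↔ (T.Adj u c ∧ c ≠ p) := by
      intro c; simp [hNu, Finset.mem_filter]
    have hSc_sub : ∀ c ∈ Nu, side T c u ⊆ A1.erase u := by
      intro c hc
      rw [hNumem] at hc
      exact side_subset_side htree hup hc.1 hc.2
    have hselfU : ∀ c ∈ Nu, c ∈ side T c u := by
      intro c hc
      rw [hNumem] at hc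
      exact mem_comp_self (Finset.mem_erase.2 ⟨hc.1.ne', Finset.mem_univ c⟩)
    have hcovU : ∀ w ∈ A1.erase u, ∃ c ∈ Nu, w ∈ side T c u := by
      intro w hw
      have hwu : w ≠ u := (Finset.mem_erase.1 hw).1
      have hwA1 : w ∈ A1 := Finset.mem_of_mem_erase hw
      have hrw1 : RW T (univ.erase p) w u := ((mem_comp.1 hwA1).2).symm
      obtain ⟨c, hcS, hcadj, hrw2⟩ := first_hit hrw1 hwu
      have hcp : c ≠ p := (Finset.mem_erase.1 hcS).1
      have hcu : T.Adj u c := hcadj.symm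
      refine ⟨c, (hNumem c).2 ⟨hcu, hcp⟩, ?_⟩
      have hsub2 : (univ.erase p).erase u ⊆ univ.erase u := by
        intro t ht
        exact Finset.mem_erase.2 ⟨(Finset.mem_erase.1 ht).1, Finset.mem_univ t⟩
      exact mem_comp.2 ⟨Finset.mem_erase.2 ⟨hwu, Finset.mem_univ w⟩, (hrw2.mono hsub2).symm⟩
    have hunotin : u ∉ (univ.erase u : Finset V) := fun h => (Finset.mem_erase.1 h).1 rfl
    have hUnbru : ∀ c ∈ Nu, ∀ x, x ∈ side T c u → T.Adj u x → x = c := by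
      intro c hc x hx hux
      rw [hNumem] at hc
      exact br_nbr_unique htree hunotin hx hc.1
        (Finset.mem_erase.2 ⟨hc.1.ne', Finset.mem_univ c⟩) hux
    have hdisjU : ∀ c ∈ Nu, ∀ c' ∈ Nu, c ≠ c' → Disjoint (side T c u) (side T c' u) := by
      intro c hc c' hc' hne
      rw [Finset.disjoint_left]
      intro x hx hx'
      rw [hNumem] at hc hc'
      exact hne (br_roots_inj htree hunotin hc.1 hc'.1
        (Finset.mem_erase.2 ⟨hc.1.ne', Finset.mem_univ c⟩)
        (Finset.mem_erase.2 ⟨hc'.1.ne', Finset.mem_univ c'⟩) hx hx')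
    have hUnionU : Nu.biUnion (fun c => side T c u) = A1.erase u := by
      apply Finset.Subset.antisymm
      · intro w hw
        obtain ⟨c, hc, hwc⟩ := Finset.mem_biUnion.1 hw
        exact hSc_sub c hc hwc
      · intro w hw
        obtain ⟨c, hc, hwc⟩ := hcovU w hw
        exact Finset.mem_biUnion.2 ⟨c, hc, hwc⟩
    have hsumU : ∑ c ∈ Nu, (side T c u).card = A1.card - 1 := by
      rw [← Finset.card_biUnion hdisjU, hUnionU, Finset.card_erase_of_mem huA1]
    have hlight : ∀ c ∈ Nu, (side T c u).card ≤ m := by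
      intro c hc
      by_contra hcon
      push_neg at hcon
      have hc' := (hNumem c).1 hc
      have hcu : T.Adj c u := hc'.1.symm
      have hcard_le : (side T c u).card + 1 ≤ A1.card := by
        have h2 := Finset.card_le_card (hSc_sub c hc)
        rw [Finset.card_erase_of_mem huA1] at h2
        omega
      have hsum_cu : (side T c u).card + (side T u c).card = Fintype.card V :=
        side_card_sum htree hcu
      have hheavy : (c, u) ∈ H := by
        rw [hHmem]
        refine ⟨hcu, by omega, by omega⟩
      have hmin2 : A1.card ≤ (side T c u).card := hemin (c, u) hheavy
      omega
    obtain ⟨IU, IW, hGU, hGW, hpIU, hpIW, hcards⟩ :=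
      PP htree m hm A2.card A2 le_rfl (fun x hx y hy => comp_conn hx hy) p hpA2
    obtain ⟨D, hDsub, hDsum, hDcard⟩ := select_subset Nu (fun c => (side T c u).card)
      (fun c hc => Finset.card_pos.2 ⟨c, hselfU c hc⟩) (A1.card - m) (by omega)
      (by rw [hsumU]; omega)
    have hDsum' : A1.card - m ≤ ∑ c ∈ D, (side T c u).card := by simpa using hDsum
    have hDA1 : ∀ c ∈ D, c ∈ A1.erase u := fun c hc =>
      hSc_sub c (hDsub hc) (hselfU c (hDsub hc))
    have hDadj : ∀ c ∈ D, T.Adj u c := fun c hc => ((hNumem c).1 (hDsub hc)).1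
    have hIWsub : IW ⊆ A2 := hGW.1
    have hIUsub : IU ⊆ A2 := hGU.1
    have hsplitU : ∑ c ∈ D, (side T c u).card + ∑ c ∈ Nu \ D, (side T c u).card
        = A1.card - 1 := by
      rw [← hsumU, ← Finset.sum_union Finset.disjoint_sdiff]
      congr 1
      exact Finset.union_sdiff_of_subset hDsub
    have hGood1 : Good T m univ (insert u IW) := by
      refine ⟨Finset.subset_univ _, ?_, ?_⟩
      · intro x hx y hy hadj
        rcases Finset.mem_insert.1 hx with hxu | hxW
        · rcases Finset.mem_insert.1 hy with hyu | hyW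
          · rw [hxu, hyu] at hadj
            exact T.irrefl hadj
          · have hadj' : T.Adj u y := by rw [← hxu]; exact hadj
            have hyp2 : y = p := (hcross12 u huA1 y (hIWsub hyW) hadj').2
            exact hpIW (hyp2 ▸ hyW)
        · rcases Finset.mem_insert.1 hy with hyu | hyW
          · have hadj' : T.Adj u x := by rw [← hyu]; exact hadj.symm
            have hxp2 : x = p := (hcross12 u huA1 x (hIWsub hxW) hadj').2
            exact hpIW (hxp2 ▸ hxW)
          · exact hGW.2.1 x hxW y hyW hadj
      · intro v _ hvS1
        have hvu : v ≠ u := fun h => hvS1 (h ▸ Finset.mem_insert_self _ _)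
        have hvW : v ∉ IW := fun h => hvS1 (Finset.mem_insert_of_mem h)
        rcases hcov12 v with hvA1 | hvA2
        · have hvA1' : v ∈ A1.erase u := Finset.mem_erase.2 ⟨hvu, hvA1⟩
          obtain ⟨c0, hc0, hvc0⟩ := hcovU v hvA1'
          refine ⟨side T c0 u, Finset.subset_univ _, hvc0, ?_, hlight c0 hc0, ?_⟩
          · intro x hx hxS1
            rcases Finset.mem_insert.1 hxS1 with h | h
            · exact (Finset.mem_erase.1 (hSc_sub c0 hc0 hx)).1 h
            · have hxA1 : x ∈ A1 := Finset.mem_of_mem_erase (hSc_sub c0 hc0 hx)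
              exact (Finset.disjoint_left.1 hdisj12) hxA1 (hIWsub h)
          · intro x hx y _ hyS1 hadj
            have hyu : y ≠ u := fun h => hyS1 (h ▸ Finset.mem_insert_self _ _)
            exact comp_closed hx (Finset.mem_erase.2 ⟨hyu, Finset.mem_univ y⟩) hadj
        · obtain ⟨C, hC1, hC2, hC3, hC4, hC5⟩ := hGW.2.2 v hvA2 hvW
          refine ⟨C, Finset.subset_univ _, hC2, ?_, hC4, ?_⟩
          · intro x hx hxS1
            rcases Finset.mem_insert.1 hxS1 with h | h
            · have hxA1 : x ∈ A1 := by rw [h]; exact huA1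
              exact (Finset.disjoint_left.1 hdisj12) hxA1 (hC1 hx)
            · exact (hC3 x hx) h
          · intro x hx y _ hyS1 hadj
            have hxA2 : x ∈ A2 := hC1 hx
            have hyA2 : y ∈ A2 := by
              rcases hcov12 y with hyA1 | h2
              · have hyu : y = u := (hcross12 y hyA1 x hxA2 hadj.symm).1
                have : y ∈ insert u IW := by rw [hyu]; exact Finset.mem_insert_self _ _
                exact absurd this hyS1
              · exact h2
            have hyW : y ∉ IW := fun h => hyS1 (Finset.mem_insert_of_mem h)
            exact hC5 x hx y hyA2 hyW hadj
    have hkept : ∀ v, v ∉ IU ∪ D → (v = u ∨ ∃ c0 ∈ Nu \ D, v ∈ side T c0 u) →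
        ∃ C : Finset V, C ⊆ univ ∧ v ∈ C ∧ (∀ x ∈ C, x ∉ IU ∪ D) ∧ C.card ≤ m ∧
          ∀ x ∈ C, ∀ y ∈ univ, y ∉ IU ∪ D → T.Adj x y → y ∈ C := by
      intro v hvS2 hvcase
      refine ⟨insert u ((Nu \ D).biUnion (fun c => side T c u)), Finset.subset_univ _,
        ?_, ?_, ?_, ?_⟩
      · rcases hvcase with h | ⟨c0, hc0, h2⟩
        · exact h ▸ Finset.mem_insert_self _ _
        · exact Finset.mem_insert_of_mem (Finset.mem_biUnion.2 ⟨c0, hc0, h2⟩)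
      · intro x hx hxS2
        rcases Finset.mem_insert.1 hx with hxu | hxB
        · rcases Finset.mem_union.1 hxS2 with h | h
          · have hxA1 : x ∈ A1 := by rw [hxu]; exact huA1
            exact (Finset.disjoint_left.1 hdisj12) hxA1 (hIUsub h)
          · have huD : u ∈ D := by rw [← hxu]; exact h
            exact T.irrefl (hDadj u huD)
        · obtain ⟨c, hc, hxc⟩ := Finset.mem_biUnion.1 hxB
          have hcNu : c ∈ Nu := (Finset.mem_sdiff.1 hc).1
          have hcD : c ∉ D := (Finset.mem_sdiff.1 hc).2
          have hxA1 : x ∈ A1 := Finset.mem_of_mem_erase (hSc_sub c hcNu hxc)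
          rcases Finset.mem_union.1 hxS2 with h | h
          · exact (Finset.disjoint_left.1 hdisj12) hxA1 (hIUsub h)
          · have hxNu : x ∈ Nu := hDsub h
            by_cases he : x = c
            · exact hcD (he ▸ h)
            · exact (Finset.disjoint_left.1 (hdisjU x hxNu c hcNu he)) (hselfU x hxNu) hxc
      · have h1 : ((Nu \ D).biUnion (fun c => side T c u)).card
            ≤ ∑ c ∈ Nu \ D, (side T c u).card := Finset.card_biUnion_le
        have h2 : (insert u ((Nu \ D).biUnion (fun c => side T c u))).card
            ≤ ((Nu \ D).biUnion (fun c => side T c u)).card + 1 := Finset.card_insert_le _ _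
        omega
      · intro x hx y _ hyS2 hadj
        rcases Finset.mem_insert.1 hx with hxu | hxB
        · have hadj' : T.Adj u y := by rw [← hxu]; exact hadj
          by_cases hyp2 : y = p
          · have : y ∈ IU := by rw [hyp2]; exact hpIU
            exact absurd (Finset.mem_union_left _ this) hyS2
          · rcases hcov12 y with hyA1 | hyA2
            · have hyu : y ≠ u := hadj'.ne'
              have hyA1' : y ∈ A1.erase u := Finset.mem_erase.2 ⟨hyu, hyA1⟩
              obtain ⟨c1, hc1, hyc1⟩ := hcovU y hyA1'
              have hyc : y = c1 := hUnbru c1 hc1 y hyc1 hadj'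
              have hc1D : c1 ∉ D := by
                intro h
                have : y ∈ D := by rw [hyc]; exact h
                exact hyS2 (Finset.mem_union_right _ this)
              exact Finset.mem_insert_of_mem
                (Finset.mem_biUnion.2 ⟨c1, Finset.mem_sdiff.2 ⟨hc1, hc1D⟩, hyc1⟩)
            · have := hcross12 u huA1 y hyA2 hadj'
              exact absurd this.2 hyp2
        · obtain ⟨c, hc, hxc⟩ := Finset.mem_biUnion.1 hxB
          by_cases hyu : y = u
          · rw [hyu]; exact Finset.mem_insert_self _ _
          · have hyc : y ∈ side T c u :=
              comp_closed hxc (Finset.mem_erase.2 ⟨hyu, Finset.mem_univ y⟩) hadj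
            exact Finset.mem_insert_of_mem (Finset.mem_biUnion.2 ⟨c, hc, hyc⟩)
    have hGood2 : Good T m univ (IU ∪ D) := by
      refine ⟨Finset.subset_univ _, ?_, ?_⟩
      · intro x hx y hy hadj
        rcases Finset.mem_union.1 hx with hxU | hxD
        · rcases Finset.mem_union.1 hy with hyU | hyD
          · exact hGU.2.1 x hxU y hyU hadj
          · have hyA1 : y ∈ A1 := Finset.mem_of_mem_erase (hDA1 y hyD)
            have := hcross12 y hyA1 x (hIUsub hxU) hadj.symm
            exact (hDadj y hyD).ne' this.1
        · rcases Finset.mem_union.1 hy with hyU | hyD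
          · have hxA1 : x ∈ A1 := Finset.mem_of_mem_erase (hDA1 x hxD)
            have := hcross12 x hxA1 y (hIUsub hyU) hadj
            exact (hDadj x hxD).ne' this.1
          · by_cases he : x = y
            · exact T.irrefl (he ▸ hadj)
            · exact sibling_not_adj htree (hDadj x hxD) (hDadj y hyD) he hadj
      · intro v _ hvS2
        have hvU : v ∉ IU := fun h => hvS2 (Finset.mem_union_left _ h)
        have hvD : v ∉ D := fun h => hvS2 (Finset.mem_union_right _ h)
        rcases hcov12 v with hvA1 | hvA2
        · by_cases hvu : v = u
          · exact hkept v hvS2 (Or.inl hvu)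
          · have hvA1' : v ∈ A1.erase u := Finset.mem_erase.2 ⟨hvu, hvA1⟩
            obtain ⟨c0, hc0, hvc0⟩ := hcovU v hvA1'
            by_cases hc0D : c0 ∈ D
            · have hvc0' : v ≠ c0 := fun h => hvD (h ▸ hc0D)
              refine ⟨comp T ((side T c0 u).erase c0) v, Finset.subset_univ _,
                mem_comp_self (Finset.mem_erase.2 ⟨hvc0', hvc0⟩), ?_, ?_, ?_⟩
              · intro x hx hxS2
                have hx1 : x ∈ (side T c0 u).erase c0 := comp_subset hx
                have hxc0 : x ∈ side T c0 u := Finset.mem_of_mem_erase hx1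
                have hxA1 : x ∈ A1 := Finset.mem_of_mem_erase (hSc_sub c0 (hDsub hc0D) hxc0)
                rcases Finset.mem_union.1 hxS2 with h | h
                · exact (Finset.disjoint_left.1 hdisj12) hxA1 (hIUsub h)
                · have hxNu : x ∈ Nu := hDsub h
                  by_cases he : x = c0
                  · exact (Finset.mem_erase.1 hx1).1 he
                  · exact (Finset.disjoint_left.1 (hdisjU x hxNu c0 (hDsub hc0D) he))
                      (hselfU x hxNu) hxc0
              · calc (comp T ((side T c0 u).erase c0) v).card
                    ≤ ((side T c0 u).erase c0).card := Finset.card_le_card comp_subset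
                  _ ≤ m := by
                      have h1 := hlight c0 (hDsub hc0D)
                      have h2 := Finset.card_erase_of_mem (hselfU c0 (hDsub hc0D))
                      omega
              · intro x hx y _ hyS2 hadj
                have hx1 : x ∈ (side T c0 u).erase c0 := comp_subset hx
                have hxc0 : x ∈ side T c0 u := Finset.mem_of_mem_erase hx1
                have hyu : y ≠ u := by
                  intro h
                  have hadj2 : T.Adj u x := by rw [← h]; exact hadj.symm
                  have : x = c0 := hUnbru c0 (hDsub hc0D) x hxc0 hadj2
                  exact (Finset.mem_erase.1 hx1).1 this
                have hyc0 : y ∈ side T c0 u :=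
                  comp_closed hxc0 (Finset.mem_erase.2 ⟨hyu, Finset.mem_univ y⟩) hadj
                have hyne : y ≠ c0 := by
                  intro h
                  have : y ∈ D := by rw [h]; exact hc0D
                  exact hyS2 (Finset.mem_union_right _ this)
                exact comp_closed hx (Finset.mem_erase.2 ⟨hyne, hyc0⟩) hadj
            · exact hkept v hvS2 (Or.inr ⟨c0, Finset.mem_sdiff.2 ⟨hc0, hc0D⟩, hvc0⟩)
        · obtain ⟨C, hC1, hC2, hC3, hC4, hC5⟩ := hGU.2.2 v hvA2 hvU
          refine ⟨C, Finset.subset_univ _, hC2, ?_, hC4, ?_⟩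
          · intro x hx hxS2
            rcases Finset.mem_union.1 hxS2 with h | h
            · exact (hC3 x hx) h
            · have hxA1 : x ∈ A1 := Finset.mem_of_mem_erase (hDA1 x h)
              exact (Finset.disjoint_left.1 hdisj12) hxA1 (hC1 hx)
          · intro x hx y _ hyS2 hadj
            have hxA2 : x ∈ A2 := hC1 hx
            have hyA2 : y ∈ A2 := by
              rcases hcov12 y with hyA1 | h2
              · have hcr := hcross12 y hyA1 x hxA2 hadj.symm
                have : x ∈ IU := by rw [hcr.2]; exact hpIU
                exact absurd this (hC3 x hx)
              · exact h2
            have hyU : y ∉ IU := fun h => hyS2 (Finset.mem_union_left _ h)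
            exact hC5 x hx y hyA2 hyU hadj
    have hcard1 : (insert u IW).card ≤ IW.card + 1 := Finset.card_insert_le _ _
    have hcard2' : (IU ∪ D).card ≤ IU.card + D.card := Finset.card_union_le _ _
    by_cases hwhich : (insert u IW).card ≤ a
    · exact ⟨insert u IW, hwhich, hGood1⟩
    · refine ⟨IU ∪ D, ?_, hGood2⟩
      push_neg at hwhich
      omega

end Stmt9

theorem stmt9 (k : ℕ) (hk : 1 ≤ k)
    {V : Type} [Fintype V] [DecidableEq V] (T : SimpleGraph V)
    (htree : T.IsTree)
    (hcard : Fintype.card V = 2 * k ∨ Fintype.card V = 2 * k + 1)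
    (A : Finset V) (hA : A.card = k)
    (hAind : ∀ x ∈ A, ∀ y ∈ A, ¬ T.Adj x y)
    (hAcind : ∀ x ∈ Aᶜ, ∀ y ∈ Aᶜ, ¬ T.Adj x y)
    (a : ℕ) (ha1 : 1 ≤ a) (ha2 : a ≤ k) :
    ∃ I : Finset V, I.card ≤ a ∧ (∀ x ∈ I, ∀ y ∈ I, ¬ T.Adj x y) ∧
      ∀ v : ↥{x : V | x ∉ I},
        Set.ncard {w : ↥{x : V | x ∉ I} |
          (T.induce {x : V | x ∉ I}).Reachable v w} ≤ k - a + 1 := by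
  classical
  set m := k - a + 1 with hmdef
  have hm1 : 1 ≤ m := by omega
  have hc2 : 2 ≤ Fintype.card V := by rcases hcard with h | h <;> omega
  have hn : Fintype.card V + 1 ≤ 2 * a + 2 * m := by rcases hcard with h | h <;> omega
  obtain ⟨I, hIcard, hGood⟩ := Stmt9.main htree m a hm1 ha1 hc2 hn
  refine ⟨I, hIcard, hGood.2.1, ?_⟩
  intro v
  have hvI : (v : V) ∉ I := v.2
  obtain ⟨C, _, hvC, hCI, hCcard, hCclosed⟩ :=
    hGood.2.2 (v : V) (Finset.mem_univ _) hvI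
  have hwalk : ∀ (x y : ↥{x : V | x ∉ I}), (T.induce {x : V | x ∉ I}).Walk x y →
      (x : V) ∈ C → (y : V) ∈ C := by
    intro x y w
    induction w with
    | nil => exact id
    | @cons xx yy zz hadj p ih =>
        intro hxx
        apply ih
        exact hCclosed _ hxx _ (Finset.mem_univ _) yy.2 hadj
  have hsub : {w : ↥{x : V | x ∉ I} | (T.induce {x : V | x ∉ I}).Reachable v w}
      ⊆ {w : ↥{x : V | x ∉ I} | (w : V) ∈ C} := by
    intro w hw
    obtain ⟨wk⟩ := hw
    exact hwalk v w wk hvC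
  have h1 : Set.ncard {w : ↥{x : V | x ∉ I} | (T.induce {x : V | x ∉ I}).Reachable v w}
      ≤ Set.ncard {w : ↥{x : V | x ∉ I} | (w : V) ∈ C} :=
    Set.ncard_le_ncard hsub (Set.toFinite _)
  have h2 : Set.ncard {w : ↥{x : V | x ∉ I} | (w : V) ∈ C} ≤ ((C : Finset V) : Set V).ncard :=
    Set.ncard_le_ncard_of_injOn (fun w => (w : V)) (fun w hw => hw)
      (fun w1 _ w2 _ h => Subtype.ext h) (Set.toFinite _)
  rw [Set.ncard_coe_finset] at h2
  omega
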